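/- Let G be a finite simple graph with vertex clique-partition π = {W_1,…,W_d}, and let G^π be the clique-whiskered graph with added vertex set W = {s_1',…,s_d'}. Then the map sending an independent vertex set S of G (including the empty set) to S ∪ {s_i' : S ∩ W_i = ∅} is a bijection from the set of independent vertex sets of G onto the set of maximal independent vertex sets of G^π; its inverse sends a maximal independent set F of G^π to F \ W. -/
import Mathlib


namespace Paper

variable {V : Type*}

/-- `S` is an independent vertex set of the graph `H` (equivalently, of any induced
subgraph of `H` containing `S`): its vertices are pairwise non-adjacent. -/
def IndepOn (H : SimpleGraph V) (S : Set V) : Prop :=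
  ∀ x ∈ S, ∀ y ∈ S, ¬ H.Adj x y

/-- `S` is a maximal independent vertex set of the graph `H`. -/
def MaxIndep (H : SimpleGraph V) (S : Set V) : Prop :=
  IndepOn H S ∧ ∀ T : Set V, IndepOn H T → S ⊆ T → T = S

/-- The data exhibiting the graph `H` (on its full vertex type) as the
clique-whiskered graph `G^π` over the base graph `G` (the induced subgraph of `H` on
`Vg`), built from a vertex clique-partition `π = {W_1, …, W_d}` of `G` by adding `d`
new vertices `s_1', …, s_d'`, where `s_i'` is adjacent exactly to the vertices of
`W i`.  The set of added vertices is `W = Set.range sV`. -/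
structure CliqueWhiskered (H : SimpleGraph V) (d : ℕ) where
  /-- the vertex set of the base graph `G`; the edges of `G` are the edges of `H`
  between vertices of `Vg`, i.e. `G` is the induced subgraph of `H` on `Vg`. -/
  Vg : Set V
  /-- the vertex clique-partition `π = {W_1, …, W_d}` of `G` -/
  W : Fin d → Set V
  /-- the added whisker vertices `s_1', …, s_d'` -/
  sV : Fin d → V
  W_ne : ∀ i, (W i).Nonempty
  W_sub : ∀ i, W i ⊆ Vg
  W_disj : ∀ i j, i ≠ j → Disjoint (W i) (W j)
  W_cover : Vg ⊆ ⋃ i, W i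
  W_clique : ∀ i, ∀ x ∈ W i, ∀ y ∈ W i, x ≠ y → H.Adj x y
  s_notin : ∀ i, sV i ∉ Vg
  s_inj : Function.Injective sV
  /-- the vertex set of `G^π` is `V(G)` together with the new vertices -/
  total : Set.univ = Vg ∪ Set.range sV
  /-- `s_i'` is adjacent exactly to the vertices of `W i` -/
  s_adj : ∀ i, ∀ w : V, H.Adj (sV i) w ↔ w ∈ W i

/-- **Theorem.** The map sending an independent vertex set `S` of `G` (possibly empty)
to `S ∪ {s_i' : S ∩ W_i = ∅}` is a bijection from the independent vertex sets of `G`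
onto the maximal independent vertex sets of `G^π`, with inverse `F ↦ F \ W`. -/
theorem cliqueWhiskered_maxIndep_bijection [Fintype V]
    (H : SimpleGraph V) (d : ℕ) (M : CliqueWhiskered H d) :
    (∀ S : Set V, S ⊆ M.Vg → IndepOn H S →
      MaxIndep H (S ∪ {y | ∃ i, y = M.sV i ∧ S ∩ M.W i = ∅}) ∧
      (S ∪ {y | ∃ i, y = M.sV i ∧ S ∩ M.W i = ∅}) \ Set.range M.sV = S) ∧
    (∀ F : Set V, MaxIndep H F →
      F \ Set.range M.sV ⊆ M.Vg ∧ IndepOn H (F \ Set.range M.sV) ∧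
      (F \ Set.range M.sV) ∪
        {y | ∃ i, y = M.sV i ∧ (F \ Set.range M.sV) ∩ M.W i = ∅} = F) := by
  constructor
  · intro S hSV hSI
    have hSr : ∀ x ∈ S, x ∉ Set.range M.sV := by
      rintro x hx ⟨i, rfl⟩; exact M.s_notin i (hSV hx)
    have hTind : IndepOn H (S ∪ {y | ∃ i, y = M.sV i ∧ S ∩ M.W i = ∅}) := by
      rintro x hx y hy hadj
      rcases hx with hxS | ⟨i, rfl, hi⟩
      · rcases hy with hyS | ⟨j, rfl, hj⟩
        · exact hSI x hxS y hyS hadj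
        · have : x ∈ M.W j := (M.s_adj j x).1 hadj.symm
          exact (Set.eq_empty_iff_forall_notMem.1 hj x) ⟨hxS, this⟩
      · rcases hy with hyS | ⟨j, rfl, hj⟩
        · have : y ∈ M.W i := (M.s_adj i y).1 hadj
          exact (Set.eq_empty_iff_forall_notMem.1 hi y) ⟨hyS, this⟩
        · have : M.sV j ∈ M.W i := (M.s_adj i _).1 hadj
          exact M.s_notin j (M.W_sub i this)
    refine ⟨⟨hTind, ?_⟩, ?_⟩
    · intro U hUI hTU
      apply Set.Subset.antisymm _ hTU
      intro x hxU
      have hx : x ∈ M.Vg ∪ Set.range M.sV := by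
        rw [← M.total]; trivial
      rcases hx with hxV | ⟨i, rfl⟩
      · obtain ⟨Wi, ⟨i, rfl⟩, hxW⟩ := M.W_cover hxV
        by_cases hE : S ∩ M.W i = ∅
        · have hsU : M.sV i ∈ U := hTU (Or.inr ⟨i, rfl, hE⟩)
          exact absurd ((M.s_adj i x).2 hxW) (hUI _ hsU _ hxU)
        · obtain ⟨y, hyS, hyW⟩ := Set.nonempty_iff_ne_empty.2 hE
          by_cases hxy : x = y
          · exact Or.inl (hxy ▸ hyS)
          · exact absurd (M.W_clique i x hxW y hyW hxy)
              (hUI _ hxU _ (hTU (Or.inl hyS)))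
      · by_cases hE : S ∩ M.W i = ∅
        · exact Or.inr ⟨i, rfl, hE⟩
        · obtain ⟨y, hyS, hyW⟩ := Set.nonempty_iff_ne_empty.2 hE
          exact absurd ((M.s_adj i y).2 hyW) (hUI _ hxU _ (hTU (Or.inl hyS)))
    · ext x
      simp only [Set.mem_diff, Set.mem_union, Set.mem_setOf_eq]
      constructor
      · rintro ⟨hxS | ⟨i, rfl, _⟩, hxr⟩
        · exact hxS
        · exact absurd ⟨i, rfl⟩ hxr
      · intro hx; exact ⟨Or.inl hx, hSr x hx⟩
  · intro F hF
    obtain ⟨hFI, hFmax⟩ := hF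
    have hSsub : F \ Set.range M.sV ⊆ M.Vg := by
      rintro x ⟨hxF, hxr⟩
      have : x ∈ M.Vg ∪ Set.range M.sV := by rw [← M.total]; trivial
      rcases this with h | h
      · exact h
      · exact absurd h hxr
    have hSI : IndepOn H (F \ Set.range M.sV) := fun x hx y hy => hFI x hx.1 y hy.1
    refine ⟨hSsub, hSI, ?_⟩
    apply Set.Subset.antisymm
    · rintro x (⟨hxF, _⟩ | ⟨i, rfl, hE⟩)
      · exact hxF
      · have hFW : F ∩ M.W i = ∅ := by
          rw [Set.eq_empty_iff_forall_notMem]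
          rintro y ⟨hyF, hyW⟩
          have hyV : y ∈ M.Vg := M.W_sub i hyW
          have hyr : y ∉ Set.range M.sV := by rintro ⟨j, rfl⟩; exact M.s_notin j hyV
          exact (Set.eq_empty_iff_forall_notMem.1 hE y) ⟨⟨hyF, hyr⟩, hyW⟩
        have hind : IndepOn H (F ∪ {M.sV i}) := by
          rintro a (ha | ha) b (hb | hb) hadj
          · exact hFI a ha b hb hadj
          · rcases hb with rfl
            have : a ∈ M.W i := (M.s_adj i a).1 hadj.symm
            exact (Set.eq_empty_iff_forall_notMem.1 hFW a) ⟨ha, this⟩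
          · rcases ha with rfl
            have : b ∈ M.W i := (M.s_adj i b).1 hadj
            exact (Set.eq_empty_iff_forall_notMem.1 hFW b) ⟨hb, this⟩
          · rcases ha with rfl; rcases hb with rfl
            exact H.irrefl hadj
        have := hFmax _ hind Set.subset_union_left
        rw [← this]; exact Or.inr rfl
    · intro x hxF
      have : x ∈ M.Vg ∪ Set.range M.sV := by rw [← M.total]; trivial
      rcases this with hxV | ⟨i, rfl⟩
      · exact Or.inl ⟨hxF, by rintro ⟨j, rfl⟩; exact M.s_notin j hxV⟩
      · refine Or.inr ⟨i, rfl, ?_⟩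
        rw [Set.eq_empty_iff_forall_notMem]
        rintro y ⟨⟨hyF, _⟩, hyW⟩
        exact hFI _ hxF _ hyF ((M.s_adj i y).2 hyW)

end Paper
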